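/- Under the setup of Theorem 1, the squared signal-to-noise ratio SNR² = ‖g_1+g_2‖²/‖g_1−g_2‖² on the unit sphere equals (x² cos⁴ α + y² sin⁴ α − (x² cos² α + y² sin² α)²) / (sin² α cos² α (x² + y² − 4x²y²)), and in particular is independent of z. -/

import Mathlib

open Real

noncomputable def vec3 (a b c : ℝ) : EuclideanSpace ℝ (Fin 3) :=
  (WithLp.equiv 2 (Fin 3 → ℝ)).symm ![a, b, c]

@[simp] lemma vec3_apply0 (a b c : ℝ) : vec3 a b c 0 = a := rfl
@[simp] lemma vec3_apply1 (a b c : ℝ) : vec3 a b c 1 = b := rfl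
@[simp] lemma vec3_apply2 (a b c : ℝ) : vec3 a b c 2 = c := rfl

lemma grad_aux (c s : ℝ) (v : EuclideanSpace ℝ (Fin 3))
    (hv : (v 0)^2 + (v 1)^2 + (v 2)^2 = 1) :
    HasGradientAt (fun w : EuclideanSpace ℝ (Fin 3) =>
      (1/2) * (w 0 * c + w 1 * s)^2 / ((w 0)^2 + (w 1)^2 + (w 2)^2))
      (vec3 ((v 0 * c + v 1 * s) * c - (v 0 * c + v 1 * s)^2 * v 0)
            ((v 0 * c + v 1 * s) * s - (v 0 * c + v 1 * s)^2 * v 1)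
            (-(v 0 * c + v 1 * s)^2 * v 2)) v := by
  have hq : (v 0)^2 + (v 1)^2 + (v 2)^2 ≠ 0 := by rw [hv]; norm_num
  have P : ∀ i : Fin 3, HasFDerivAt (fun w : EuclideanSpace ℝ (Fin 3) => w i)
      (EuclideanSpace.proj (𝕜 := ℝ) i) v := fun i =>
    ((EuclideanSpace.proj (𝕜 := ℝ) i).hasFDerivAt (x := v)).congr_of_eventuallyEq
      (Filter.Eventually.of_forall fun w => (PiLp.proj_apply 2 (fun _ : Fin 3 => ℝ) i w).symm)
  have h1 : HasFDerivAt (fun w : EuclideanSpace ℝ (Fin 3) => w 0 * c + w 1 * s)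
      (c • EuclideanSpace.proj (𝕜 := ℝ) 0 + s • EuclideanSpace.proj (𝕜 := ℝ) 1) v := by
    have := ((P 0).mul_const c).add ((P 1).mul_const s)
    exact this
  have hqd : HasFDerivAt (fun w : EuclideanSpace ℝ (Fin 3) => (w 0)^2 + (w 1)^2 + (w 2)^2)
      ((2 * v 0) • EuclideanSpace.proj (𝕜 := ℝ) 0 + (2 * v 1) • EuclideanSpace.proj (𝕜 := ℝ) 1
        + (2 * v 2) • EuclideanSpace.proj (𝕜 := ℝ) 2) v := by
    have h := (((P 0).mul (P 0)).add ((P 1).mul (P 1))).add ((P 2).mul (P 2))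
    have h2 := h.congr_of_eventuallyEq (f₁ := fun w : EuclideanSpace ℝ (Fin 3) =>
      (w 0)^2 + (w 1)^2 + (w 2)^2) (Filter.Eventually.of_forall fun w => by simp only [Pi.add_apply, Pi.mul_apply]; ring)
    refine h2.congr_fderiv ?_
    ext w; simp; ring
  have hinv : HasFDerivAt (fun w : EuclideanSpace ℝ (Fin 3) =>
      ((w 0)^2 + (w 1)^2 + (w 2)^2)⁻¹)
      ((-(((v 0)^2 + (v 1)^2 + (v 2)^2)^2)⁻¹) •
        ((2 * v 0) • EuclideanSpace.proj (𝕜 := ℝ) 0 + (2 * v 1) • EuclideanSpace.proj (𝕜 := ℝ) 1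
          + (2 * v 2) • EuclideanSpace.proj (𝕜 := ℝ) 2)) v :=
    (hasDerivAt_inv hq).comp_hasFDerivAt v hqd
  have hnum : HasFDerivAt (fun w : EuclideanSpace ℝ (Fin 3) =>
      (1/2) * ((w 0 * c + w 1 * s) * (w 0 * c + w 1 * s)))
      ((1/2 : ℝ) • ((v 0 * c + v 1 * s) • (c • EuclideanSpace.proj (𝕜 := ℝ) 0 + s • EuclideanSpace.proj (𝕜 := ℝ) 1)
        + (v 0 * c + v 1 * s) • (c • EuclideanSpace.proj (𝕜 := ℝ) 0 + s • EuclideanSpace.proj (𝕜 := ℝ) 1))) v := by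
    have := (h1.mul h1).const_mul (1/2 : ℝ)
    exact this
  have hmul := hnum.mul hinv
  have htotal := hmul.congr_of_eventuallyEq (f₁ := fun w : EuclideanSpace ℝ (Fin 3) =>
    (1/2) * (w 0 * c + w 1 * s)^2 / ((w 0)^2 + (w 1)^2 + (w 2)^2))
    (Filter.Eventually.of_forall fun w => by simp only [Pi.mul_apply]; rw [div_eq_mul_inv]; ring_nf)
  rw [hasGradientAt_iff_hasFDerivAt]
  refine htotal.congr_fderiv ?_
  ext w
  simp [InnerProductSpace.toDual_apply_apply, PiLp.inner_apply, Fin.sum_univ_three, hv,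
    vec3, real_inner_smul_left]
  ring

lemma vec3_add (a b c d e f : ℝ) : vec3 a b c + vec3 d e f = vec3 (a+d) (b+e) (c+f) := by
  ext i; fin_cases i <;> rfl

lemma vec3_sub (a b c d e f : ℝ) : vec3 a b c - vec3 d e f = vec3 (a-d) (b-e) (c-f) := by
  ext i; fin_cases i <;> rfl

lemma norm_sq_vec3 (a b c : ℝ) : ‖vec3 a b c‖^2 = a^2 + b^2 + c^2 := by
  rw [← real_inner_self_eq_norm_sq]
  simp only [real_inner_self_eq_norm_sq, EuclideanSpace.norm_sq_eq, Fin.sum_univ_three,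
    vec3_apply0, vec3_apply1, vec3_apply2, Real.norm_eq_abs, sq_abs]

theorem snr_sq_formula (α : ℝ) (hα : 0 < α ∧ α < π / 4)
    (f₁ f₂ : EuclideanSpace ℝ (Fin 3) → ℝ)
    (hf₁ : ∀ v : EuclideanSpace ℝ (Fin 3),
      f₁ v = (1 / 2) * (v 0 * cos α + v 1 * sin α) ^ 2
        / ((v 0) ^ 2 + (v 1) ^ 2 + (v 2) ^ 2))
    (hf₂ : ∀ v : EuclideanSpace ℝ (Fin 3),
      f₂ v = (1 / 2) * (v 0 * cos α - v 1 * sin α) ^ 2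
        / ((v 0) ^ 2 + (v 1) ^ 2 + (v 2) ^ 2))
    (v : EuclideanSpace ℝ (Fin 3)) (hv : (v 0) ^ 2 + (v 1) ^ 2 + (v 2) ^ 2 = 1)
    (hden : sin α ^ 2 * cos α ^ 2
        * ((v 0) ^ 2 + (v 1) ^ 2 - 4 * (v 0) ^ 2 * (v 1) ^ 2) ≠ 0) :
    ‖gradient f₁ v + gradient f₂ v‖ ^ 2 / ‖gradient f₁ v - gradient f₂ v‖ ^ 2
      = ((v 0) ^ 2 * cos α ^ 4 + (v 1) ^ 2 * sin α ^ 4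
          - ((v 0) ^ 2 * cos α ^ 2 + (v 1) ^ 2 * sin α ^ 2) ^ 2)
        / (sin α ^ 2 * cos α ^ 2
          * ((v 0) ^ 2 + (v 1) ^ 2 - 4 * (v 0) ^ 2 * (v 1) ^ 2)) := by
  have e₁ : f₁ = fun w : EuclideanSpace ℝ (Fin 3) =>
      (1/2) * (w 0 * cos α + w 1 * sin α)^2 / ((w 0)^2 + (w 1)^2 + (w 2)^2) :=
    funext fun w => by rw [hf₁ w]
  have e₂ : f₂ = fun w : EuclideanSpace ℝ (Fin 3) =>
      (1/2) * (w 0 * cos α + w 1 * (-sin α))^2 / ((w 0)^2 + (w 1)^2 + (w 2)^2) :=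
    funext fun w => by rw [hf₂ w]; ring_nf
  have hg₁ : gradient f₁ v = vec3 ((v 0 * cos α + v 1 * sin α) * cos α - (v 0 * cos α + v 1 * sin α)^2 * v 0)
      ((v 0 * cos α + v 1 * sin α) * sin α - (v 0 * cos α + v 1 * sin α)^2 * v 1)
      (-(v 0 * cos α + v 1 * sin α)^2 * v 2) := by
    rw [e₁]; exact (grad_aux (cos α) (sin α) v hv).gradient
  have hg₂ : gradient f₂ v = vec3 ((v 0 * cos α + v 1 * (-sin α)) * cos α - (v 0 * cos α + v 1 * (-sin α))^2 * v 0)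
      ((v 0 * cos α + v 1 * (-sin α)) * (-sin α) - (v 0 * cos α + v 1 * (-sin α))^2 * v 1)
      (-(v 0 * cos α + v 1 * (-sin α))^2 * v 2) := by
    rw [e₂]; exact (grad_aux (cos α) (-sin α) v hv).gradient
  rw [hg₁, hg₂, vec3_add, vec3_sub, norm_sq_vec3, norm_sq_vec3]
  set x := v 0; set y := v 1; set z := v 2
  set c := cos α; set s := sin α
  have hsum : ((x * c + y * s) * c - (x * c + y * s) ^ 2 * x
        + ((x * c + y * (-s)) * c - (x * c + y * (-s)) ^ 2 * x)) ^ 2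
      + ((x * c + y * s) * s - (x * c + y * s) ^ 2 * y
        + ((x * c + y * (-s)) * (-s) - (x * c + y * (-s)) ^ 2 * y)) ^ 2
      + (-(x * c + y * s) ^ 2 * z + -(x * c + y * (-s)) ^ 2 * z) ^ 2
      = 4 * (x^2 * c^4 + y^2 * s^4 - (x^2 * c^2 + y^2 * s^2)^2) := by
    linear_combination (4 * (x^2 * c^2 + y^2 * s^2)^2) * hv
  have hdiff : ((x * c + y * s) * c - (x * c + y * s) ^ 2 * x
        - ((x * c + y * (-s)) * c - (x * c + y * (-s)) ^ 2 * x)) ^ 2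
      + ((x * c + y * s) * s - (x * c + y * s) ^ 2 * y
        - ((x * c + y * (-s)) * (-s) - (x * c + y * (-s)) ^ 2 * y)) ^ 2
      + (-(x * c + y * s) ^ 2 * z - -(x * c + y * (-s)) ^ 2 * z) ^ 2
      = 4 * (s^2 * c^2 * (x^2 + y^2 - 4 * x^2 * y^2)) := by
    linear_combination (16 * c^2 * s^2 * x^2 * y^2) * hv
  rw [hsum, hdiff, mul_div_mul_left _ _ (by norm_num : (4:ℝ) ≠ 0)]
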